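/- Let U: R^d → R be C² satisfying: (a) θ·∇U(θ) ≥ c₁|θ|² − C₁ for all θ with constants c₁ > 0, C₁ ∈ R; (b) ∇U is m_U-Lipschitz with U achieving its minimum (so |∇U(θ)| ≤ m_U|θ − θ*| for a minimizer θ*). Fix α, β > 0 and a ∈ (0,1). Then there exist b > 0 and constants A, B, C > 0 such that, with φ(θ,r) = a(U(θ) + |r|²/2) + b θ·r and W = e^φ, the Hessian-free high-resolution generator L_R = (−β∇U + r)·∇_θ + (−αr − ∇U)·∇_r + βΔ_θ + αΔ_r satisfies −(L_R W)/W ≥ A|θ|² + B|r|² − C for all (θ,r) ∈ R^d × R^d. -/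

import Mathlib

open scoped RealInnerProductSpace

/-- Directional derivative in the i-th θ-coordinate on `E × E`, `E = EuclideanSpace ℝ (Fin d)`. -/
noncomputable def DTheta {d : ℕ} (i : Fin d)
    (f : EuclideanSpace ℝ (Fin d) × EuclideanSpace ℝ (Fin d) → ℝ)
    (x : EuclideanSpace ℝ (Fin d) × EuclideanSpace ℝ (Fin d)) : ℝ :=
  fderiv ℝ f x (EuclideanSpace.single i 1, 0)

/-- Directional derivative in the i-th r-coordinate. -/
noncomputable def DR {d : ℕ} (i : Fin d)
    (f : EuclideanSpace ℝ (Fin d) × EuclideanSpace ℝ (Fin d) → ℝ)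
    (x : EuclideanSpace ℝ (Fin d) × EuclideanSpace ℝ (Fin d)) : ℝ :=
  fderiv ℝ f x (0, EuclideanSpace.single i 1)

/-- i-th partial derivative of `U`. -/
noncomputable def pdUe {d : ℕ} (i : Fin d) (U : EuclideanSpace ℝ (Fin d) → ℝ)
    (θ : EuclideanSpace ℝ (Fin d)) : ℝ :=
  fderiv ℝ U θ (EuclideanSpace.single i 1)

/-- Generator of the Hessian-free high-resolution dynamics:
`L_R = (−β∇U+r)·∇_θ + (−αr−∇U)·∇_r + βΔ_θ + αΔ_r`. -/
noncomputable def LRe {d : ℕ} (U : EuclideanSpace ℝ (Fin d) → ℝ) (α β : ℝ)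
    (f : EuclideanSpace ℝ (Fin d) × EuclideanSpace ℝ (Fin d) → ℝ)
    (x : EuclideanSpace ℝ (Fin d) × EuclideanSpace ℝ (Fin d)) : ℝ :=
  (∑ i, (-(β * pdUe i U x.1) + x.2 i) * DTheta i f x)
    + (∑ i, (-(α * x.2 i) - pdUe i U x.1) * DR i f x)
    + β * ∑ i, DTheta i (DTheta i f) x
    + α * ∑ i, DR i (DR i f) x


set_option maxHeartbeats 1000000 in

lemma key_alg (α β a c₁ C₁ m_U Rs dd : ℝ) (hα : 0 < α) (hβ : 0 < β)
    (ha0 : 0 < a) (ha1 : a < 1) (hc₁ : 0 < c₁) (hm : 0 < m_U)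
    (hRs : 0 ≤ Rs) (hdd : 0 ≤ dd) :
    ∃ b > 0, ∃ A > 0, ∃ B > 0, ∃ C > 0, ∀ nθ nr P Q T Gθ Δ : ℝ,
      0 ≤ nθ → 0 ≤ nr → 0 ≤ P →
      Gθ ≥ c₁ * nθ ^ 2 - C₁ →
      |Q| ≤ m_U * (nθ + Rs) * nr →
      |T| ≤ nθ * nr →
      Δ ≤ m_U * dd →
      -((-(a * β * (1 - a))) * P + (b * β * (2 * a - 1)) * Q
          + (b + β * b ^ 2 - a * α * (1 - a)) * nr ^ 2
          + (b * α * (2 * a - 1)) * T + (α * b ^ 2) * nθ ^ 2 + (-b) * Gθ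
          + (a * β) * Δ + a * α * dd)
        ≥ A * nθ ^ 2 + B * nr ^ 2 - C := by
  have ha1' : 0 < 1 - a := by linarith
  obtain ⟨ε, hε0, hεsum⟩ : ∃ ε : ℝ, 0 < ε ∧ β * m_U * (ε / 2) + α * (ε / 2) = c₁ / 2 := by
    refine ⟨c₁ / (β * m_U + α), by positivity, ?_⟩
    have h : β * m_U + α ≠ 0 := by positivity
    field_simp
  obtain ⟨K, hK0, hKeq⟩ : ∃ K : ℝ, 0 < K ∧
      K = β * m_U / (2 * ε) + β * m_U / 2 + α / (2 * ε) + 1 + β :=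
    ⟨_, by positivity, rfl⟩
  obtain ⟨b, hb0, hb1, hb2, hb3⟩ : ∃ b : ℝ, 0 < b ∧ b ≤ 1 ∧ α * b ≤ c₁ / 4 ∧
      b * K ≤ a * α * (1 - a) / 4 := by
    set b0 : ℝ := min 1 (min (c₁ / (4 * α)) (a * α * (1 - a) / (4 * K))) with hb0def
    refine ⟨b0, ?_, min_le_left _ _, ?_, ?_⟩
    · apply lt_min one_pos; apply lt_min <;> positivity
    · have h : b0 ≤ c₁ / (4 * α) :=
        le_trans (min_le_right _ _) (min_le_left _ _)
      calc α * b0 ≤ α * (c₁ / (4 * α)) := mul_le_mul_of_nonneg_left h hα.le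
        _ = c₁ / 4 := by field_simp
    · have h : b0 ≤ a * α * (1 - a) / (4 * K) :=
        le_trans (min_le_right _ _) (min_le_right _ _)
      calc b0 * K ≤ (a * α * (1 - a) / (4 * K)) * K := mul_le_mul_of_nonneg_right h hK0.le
        _ = a * α * (1 - a) / 4 := by field_simp
  refine ⟨b, hb0, b * c₁ / 4, by positivity, a * α * (1 - a) / 2, by positivity,
    b * |C₁| + b * β * m_U * Rs ^ 2 / 2 + a * β * m_U * dd + a * α * dd + 1, by positivity,
    fun nθ nr P Q T Gθ Δ hnθ hnr hP hGθ hQ hT hΔ => ?_⟩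
  have h2a : |2 * a - 1| ≤ 1 := by rw [abs_le]; constructor <;> linarith
  have m1 : a * β * (1 - a) * P ≥ 0 := by positivity
  have m2 : b * Gθ ≥ b * c₁ * nθ ^ 2 - b * |C₁| := by
    have h1 : Gθ ≥ c₁ * nθ ^ 2 - |C₁| := le_trans (by nlinarith [le_abs_self C₁]) hGθ
    nlinarith
  have amgm1 : nθ * nr ≤ ε / 2 * nθ ^ 2 + 1 / (2 * ε) * nr ^ 2 := by
    have h2 : 2 * ε * (nθ * nr) ≤ 2 * ε * (ε / 2 * nθ ^ 2 + 1 / (2 * ε) * nr ^ 2) := by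
      have key2 : 2 * ε * (ε / 2 * nθ ^ 2 + 1 / (2 * ε) * nr ^ 2)
          = ε ^ 2 * nθ ^ 2 + nr ^ 2 := by field_simp
      rw [key2]; linarith [sq_nonneg (ε * nθ - nr)]
    exact le_of_mul_le_mul_left h2 (by positivity)
  have amgm2 : Rs * nr ≤ Rs ^ 2 / 2 + nr ^ 2 / 2 := by nlinarith [sq_nonneg (Rs - nr)]
  have m3 : (b * β * (2 * a - 1)) * Q
      ≤ b * β * m_U * (ε / 2 * nθ ^ 2 + 1 / (2 * ε) * nr ^ 2)
        + b * β * m_U * (Rs ^ 2 / 2 + nr ^ 2 / 2) := by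
    have h1 : (2 * a - 1) * Q ≤ |Q| := by
      calc (2 * a - 1) * Q ≤ |(2 * a - 1) * Q| := le_abs_self _
        _ = |2 * a - 1| * |Q| := abs_mul _ _
        _ ≤ 1 * |Q| := mul_le_mul_of_nonneg_right h2a (abs_nonneg _)
        _ = |Q| := one_mul _
    have h2 : (b * β * (2 * a - 1)) * Q ≤ b * β * (m_U * (nθ + Rs) * nr) := by
      have := mul_le_mul_of_nonneg_left (le_trans h1 hQ) (by positivity : (0:ℝ) ≤ b * β)
      calc (b * β * (2 * a - 1)) * Q = b * β * ((2 * a - 1) * Q) := by ring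
        _ ≤ b * β * (m_U * (nθ + Rs) * nr) := this
    have hb : (0:ℝ) ≤ b * β * m_U := by positivity
    nlinarith [mul_le_mul_of_nonneg_left amgm1 hb, mul_le_mul_of_nonneg_left amgm2 hb]
  have m4 : (b * α * (2 * a - 1)) * T ≤ b * α * (ε / 2 * nθ ^ 2 + 1 / (2 * ε) * nr ^ 2) := by
    have h1 : (2 * a - 1) * T ≤ |T| := by
      calc (2 * a - 1) * T ≤ |(2 * a - 1) * T| := le_abs_self _
        _ = |2 * a - 1| * |T| := abs_mul _ _
        _ ≤ 1 * |T| := mul_le_mul_of_nonneg_right h2a (abs_nonneg _)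
        _ = |T| := one_mul _
    have hb : (0:ℝ) ≤ b * α := by positivity
    have h2 : (b * α * (2 * a - 1)) * T ≤ b * α * (nθ * nr) := by
      have := mul_le_mul_of_nonneg_left (le_trans h1 hT) hb
      calc (b * α * (2 * a - 1)) * T = b * α * ((2 * a - 1) * T) := by ring
        _ ≤ b * α * (nθ * nr) := this
    nlinarith [mul_le_mul_of_nonneg_left amgm1 hb]
  have m5 : (a * β) * Δ ≤ a * β * (m_U * dd) :=
    mul_le_mul_of_nonneg_left hΔ (by positivity)
  have c6 : b * c₁ - b * (β * m_U * (ε / 2) + α * (ε / 2)) - α * b ^ 2 ≥ b * c₁ / 4 := by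
    rw [hεsum]; nlinarith
  have c7 : a * α * (1 - a) - (b + β * b ^ 2 + b * β * m_U * (1 / (2 * ε))
      + b * β * m_U / 2 + b * α * (1 / (2 * ε))) ≥ a * α * (1 - a) / 2 := by
    have h2 : β * b ^ 2 ≤ β * b := by
      nlinarith [mul_le_mul_of_nonneg_left hb1 (show (0:ℝ) ≤ β * b by positivity)]
    have h3 : b + β * b ^ 2 + b * β * m_U * (1 / (2 * ε)) + b * β * m_U / 2
        + b * α * (1 / (2 * ε)) ≤ b * K := by
      rw [hKeq]; have hbK : b * (β * b) ≥ 0 := by positivity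
      have e1 : b * (β * m_U / (2 * ε) + β * m_U / 2 + α / (2 * ε) + 1 + β)
          = b + β * b + b * β * m_U * (1 / (2 * ε)) + b * β * m_U / 2
            + b * α * (1 / (2 * ε)) := by ring
      rw [e1]; linarith
    have hpos : 0 ≤ a * α * (1 - a) := by positivity
    linarith
  have m6 : (b * c₁ - b * (β * m_U * (ε / 2) + α * (ε / 2)) - α * b ^ 2) * nθ ^ 2
      ≥ (b * c₁ / 4) * nθ ^ 2 := mul_le_mul_of_nonneg_right c6 (sq_nonneg nθ)
  have m7 : (a * α * (1 - a) - (b + β * b ^ 2 + b * β * m_U * (1 / (2 * ε))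
      + b * β * m_U / 2 + b * α * (1 / (2 * ε)))) * nr ^ 2
      ≥ (a * α * (1 - a) / 2) * nr ^ 2 := mul_le_mul_of_nonneg_right c7 (sq_nonneg nr)
  linarith [m1, m2, m3, m4, m5, m6, m7]

variable {d : ℕ}
local notation "E" => EuclideanSpace ℝ (Fin d)

lemma W_deriv (U : E → ℝ) (hU : ContDiff ℝ 2 U) (a b : ℝ) (x : E × E) :
    ∃ L : (E × E) →L[ℝ] ℝ,
      HasFDerivAt (fun y : E × E => Real.exp (a * (U y.1 + ‖y.2‖ ^ 2 / 2) + b * ⟪y.1, y.2⟫)) L x ∧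
      ∀ v w : E, L (v, w) = Real.exp (a * (U x.1 + ‖x.2‖ ^ 2 / 2) + b * ⟪x.1, x.2⟫)
        * (a * (fderiv ℝ U x.1 v + ⟪x.2, w⟫) + b * (⟪v, x.2⟫ + ⟪x.1, w⟫)) := by
  have hU1 : HasFDerivAt (fun y : E × E => U y.1)
      ((fderiv ℝ U x.1).comp (ContinuousLinearMap.fst ℝ E E)) x :=
    (((hU.differentiable (by norm_num)) x.1).hasFDerivAt).comp x (hasFDerivAt_fst)
  have hsq : HasFDerivAt (fun y : E × E => ⟪y.2, y.2⟫)
      ((fderivInnerCLM ℝ (x.2, x.2)).comp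
        ((ContinuousLinearMap.snd ℝ E E).prod (ContinuousLinearMap.snd ℝ E E))) x :=
    (hasFDerivAt_snd).inner ℝ (hasFDerivAt_snd)
  have hin : HasFDerivAt (fun y : E × E => ⟪y.1, y.2⟫)
      ((fderivInnerCLM ℝ (x.1, x.2)).comp
        ((ContinuousLinearMap.fst ℝ E E).prod (ContinuousLinearMap.snd ℝ E E))) x :=
    (hasFDerivAt_fst).inner ℝ (hasFDerivAt_snd)
  have hnorm : (fun y : E × E => a * (U y.1 + ‖y.2‖ ^ 2 / 2) + b * ⟪y.1, y.2⟫)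
      = (fun y : E × E => (a * U y.1 + (a / 2) * ⟪y.2, y.2⟫) + b * ⟪y.1, y.2⟫) := by
    funext y; rw [real_inner_self_eq_norm_sq]; ring
  have Hphi := ((hU1.const_mul a).add (hsq.const_mul (a / 2))).add (hin.const_mul b)
  have HW := (Real.hasDerivAt_exp
    ((a * U x.1 + (a / 2) * ⟪x.2, x.2⟫) + b * ⟪x.1, x.2⟫)).comp_hasFDerivAt x Hphi
  have hval : (a * U x.1 + (a / 2) * ⟪x.2, x.2⟫) + b * ⟪x.1, x.2⟫
      = a * (U x.1 + ‖x.2‖ ^ 2 / 2) + b * ⟪x.1, x.2⟫ := by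
    rw [real_inner_self_eq_norm_sq]; ring
  have hcomp : (fun y : E × E => Real.exp (a * (U y.1 + ‖y.2‖ ^ 2 / 2) + b * ⟪y.1, y.2⟫))
      = Real.exp ∘ (fun y : E × E => (a * U y.1 + (a / 2) * ⟪y.2, y.2⟫) + b * ⟪y.1, y.2⟫) := by
    funext y; simp only [Function.comp_apply]; congr 1
    rw [real_inner_self_eq_norm_sq]; ring
  refine ⟨_, by rw [hcomp]; exact HW, fun v w => ?_⟩
  simp only [ContinuousLinearMap.smul_apply, ContinuousLinearMap.comp_apply,
    ContinuousLinearMap.add_apply, ContinuousLinearMap.prod_apply,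
    ContinuousLinearMap.coe_fst', ContinuousLinearMap.coe_snd',
    fderivInnerCLM_apply, smul_eq_mul, hval]
  rw [real_inner_comm w x.2]
  ring

lemma DTheta_W (U : E → ℝ) (hU : ContDiff ℝ 2 U) (a b : ℝ) (i : Fin d) (x : E × E) :
    DTheta i (fun y : E × E => Real.exp (a * (U y.1 + ‖y.2‖ ^ 2 / 2) + b * ⟪y.1, y.2⟫)) x
      = Real.exp (a * (U x.1 + ‖x.2‖ ^ 2 / 2) + b * ⟪x.1, x.2⟫)
        * (a * pdUe i U x.1 + b * x.2 i) := by
  obtain ⟨L, hL, hLval⟩ := W_deriv U hU a b x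
  rw [DTheta, hL.fderiv, hLval]
  simp [pdUe, EuclideanSpace.inner_single_left, inner_zero_right]

lemma DR_W (U : E → ℝ) (hU : ContDiff ℝ 2 U) (a b : ℝ) (i : Fin d) (x : E × E) :
    DR i (fun y : E × E => Real.exp (a * (U y.1 + ‖y.2‖ ^ 2 / 2) + b * ⟪y.1, y.2⟫)) x
      = Real.exp (a * (U x.1 + ‖x.2‖ ^ 2 / 2) + b * ⟪x.1, x.2⟫)
        * (a * x.2 i + b * x.1 i) := by
  obtain ⟨L, hL, hLval⟩ := W_deriv U hU a b x
  rw [DR, hL.fderiv, hLval]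
  simp [EuclideanSpace.inner_single_left, EuclideanSpace.inner_single_right, inner_zero_right]

lemma pdUe_diff (U : E → ℝ) (hU : ContDiff ℝ 2 U) (i : Fin d) :
    Differentiable ℝ (pdUe i U) := by
  have h2 : Differentiable ℝ (fderiv ℝ U) :=
    (hU.fderiv_right (m := 1) (by norm_num)).differentiable (by norm_num)
  exact (ContinuousLinearMap.apply ℝ ℝ (EuclideanSpace.single i (1:ℝ))).differentiable.comp h2

lemma DTheta2 (U : E → ℝ) (hU : ContDiff ℝ 2 U) (a b : ℝ) (i : Fin d) (x : E × E) :
    DTheta i (DTheta i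
        (fun y : E × E => Real.exp (a * (U y.1 + ‖y.2‖ ^ 2 / 2) + b * ⟪y.1, y.2⟫))) x
      = Real.exp (a * (U x.1 + ‖x.2‖ ^ 2 / 2) + b * ⟪x.1, x.2⟫)
        * ((a * pdUe i U x.1 + b * x.2 i) ^ 2
            + a * fderiv ℝ (pdUe i U) x.1 (EuclideanSpace.single i 1)) := by
  have hfun : DTheta i
      (fun y : E × E => Real.exp (a * (U y.1 + ‖y.2‖ ^ 2 / 2) + b * ⟪y.1, y.2⟫))
      = fun y : E × E => Real.exp (a * (U y.1 + ‖y.2‖ ^ 2 / 2) + b * ⟪y.1, y.2⟫)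
          * (a * pdUe i U y.1 + b * ⟪EuclideanSpace.single i (1:ℝ), y.2⟫) := by
    funext y
    rw [DTheta_W U hU a b i y]
    simp [EuclideanSpace.inner_single_left]
  rw [DTheta, hfun]
  obtain ⟨L, hL, hLval⟩ := W_deriv U hU a b x
  have hlin : HasFDerivAt
      (fun y : E × E => a * pdUe i U y.1 + b * ⟪EuclideanSpace.single i (1:ℝ), y.2⟫)
      ((a • ((fderiv ℝ (pdUe i U) x.1).comp (ContinuousLinearMap.fst ℝ E E))) +
        (b • ((fderivInnerCLM ℝ (EuclideanSpace.single i (1:ℝ), x.2)).comp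
          ((0 : (E × E) →L[ℝ] E).prod (ContinuousLinearMap.snd ℝ E E))))) x := by
    exact ((((pdUe_diff U hU i) x.1).hasFDerivAt.comp x hasFDerivAt_fst).const_mul a).add
      (((hasFDerivAt_const (EuclideanSpace.single i (1:ℝ)) x).inner ℝ hasFDerivAt_snd).const_mul b)
  have hprod := hL.fun_mul hlin
  rw [hprod.fderiv]
  simp only [ContinuousLinearMap.add_apply, ContinuousLinearMap.smul_apply,
    ContinuousLinearMap.comp_apply, ContinuousLinearMap.prod_apply,
    ContinuousLinearMap.coe_fst', ContinuousLinearMap.coe_snd',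
    ContinuousLinearMap.zero_apply, fderivInnerCLM_apply, smul_eq_mul]
  rw [hLval]
  simp [pdUe, EuclideanSpace.inner_single_left, inner_zero_right]
  ring

lemma DR2 (U : E → ℝ) (hU : ContDiff ℝ 2 U) (a b : ℝ) (i : Fin d) (x : E × E) :
    DR i (DR i
        (fun y : E × E => Real.exp (a * (U y.1 + ‖y.2‖ ^ 2 / 2) + b * ⟪y.1, y.2⟫))) x
      = Real.exp (a * (U x.1 + ‖x.2‖ ^ 2 / 2) + b * ⟪x.1, x.2⟫)
        * ((a * x.2 i + b * x.1 i) ^ 2 + a) := by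
  have hfun : DR i
      (fun y : E × E => Real.exp (a * (U y.1 + ‖y.2‖ ^ 2 / 2) + b * ⟪y.1, y.2⟫))
      = fun y : E × E => Real.exp (a * (U y.1 + ‖y.2‖ ^ 2 / 2) + b * ⟪y.1, y.2⟫)
          * (a * ⟪EuclideanSpace.single i (1:ℝ), y.2⟫
              + b * ⟪EuclideanSpace.single i (1:ℝ), y.1⟫) := by
    funext y
    rw [DR_W U hU a b i y]
    simp [EuclideanSpace.inner_single_left]
  rw [DR, hfun]
  obtain ⟨L, hL, hLval⟩ := W_deriv U hU a b x
  have hlin : HasFDerivAt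
      (fun y : E × E => a * ⟪EuclideanSpace.single i (1:ℝ), y.2⟫
          + b * ⟪EuclideanSpace.single i (1:ℝ), y.1⟫)
      ((a • ((fderivInnerCLM ℝ (EuclideanSpace.single i (1:ℝ), x.2)).comp
          ((0 : (E × E) →L[ℝ] E).prod (ContinuousLinearMap.snd ℝ E E)))) +
        (b • ((fderivInnerCLM ℝ (EuclideanSpace.single i (1:ℝ), x.1)).comp
          ((0 : (E × E) →L[ℝ] E).prod (ContinuousLinearMap.fst ℝ E E))))) x := by
    exact (((hasFDerivAt_const (EuclideanSpace.single i (1:ℝ)) x).inner ℝ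
        hasFDerivAt_snd).const_mul a).add
      (((hasFDerivAt_const (EuclideanSpace.single i (1:ℝ)) x).inner ℝ
        hasFDerivAt_fst).const_mul b)
  have hprod := hL.fun_mul hlin
  rw [hprod.fderiv]
  simp only [ContinuousLinearMap.add_apply, ContinuousLinearMap.smul_apply,
    ContinuousLinearMap.comp_apply, ContinuousLinearMap.prod_apply,
    ContinuousLinearMap.coe_fst', ContinuousLinearMap.coe_snd',
    ContinuousLinearMap.zero_apply, fderivInnerCLM_apply, smul_eq_mul]
  rw [hLval]
  simp [EuclideanSpace.inner_single_left, EuclideanSpace.inner_single_right, EuclideanSpace.single_apply, inner_zero_right]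
  ring


lemma hessian_bound (U : E → ℝ) (hU : ContDiff ℝ 2 U) (m_U : ℝ) (hm : 0 < m_U)
    (hLip : ∀ θ₁ θ₂, ‖gradient U θ₁ - gradient U θ₂‖ ≤ m_U * ‖θ₁ - θ₂‖)
    (i : Fin d) (θ : E) :
    fderiv ℝ (pdUe i U) θ (EuclideanSpace.single i 1) ≤ m_U := by
  have hgrad : ∀ (t : E) (v : E), fderiv ℝ U t v = ⟪gradient U t, v⟫ := by
    intro t v
    have h := ((hU.differentiable (by norm_num)) t).hasGradientAt
    rw [hasGradientAt_iff_hasFDerivAt] at h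
    rw [h.fderiv, InnerProductSpace.toDual_apply_apply]
  have hlipPd : LipschitzWith m_U.toNNReal (pdUe i U) := by
    refine LipschitzWith.of_dist_le_mul fun t₁ t₂ => ?_
    rw [Real.dist_eq, Real.coe_toNNReal _ hm.le]
    have : pdUe i U t₁ - pdUe i U t₂
        = ⟪gradient U t₁ - gradient U t₂, EuclideanSpace.single i 1⟫ := by
      rw [inner_sub_left]; simp only [pdUe, hgrad]
    rw [this]
    calc |⟪gradient U t₁ - gradient U t₂, EuclideanSpace.single i (1:ℝ)⟫|
        ≤ ‖gradient U t₁ - gradient U t₂‖ * ‖EuclideanSpace.single i (1:ℝ)‖ :=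
          abs_real_inner_le_norm _ _
      _ ≤ m_U * ‖t₁ - t₂‖ := by
          rw [EuclideanSpace.norm_single]; simpa using hLip t₁ t₂
      _ = m_U * dist t₁ t₂ := by rw [dist_eq_norm]
  have hb := ((pdUe_diff U hU i) θ).hasFDerivAt.le_of_lipschitz hlipPd
  calc fderiv ℝ (pdUe i U) θ (EuclideanSpace.single i 1)
      ≤ ‖fderiv ℝ (pdUe i U) θ (EuclideanSpace.single i 1)‖ := le_abs_self _
    _ ≤ ‖fderiv ℝ (pdUe i U) θ‖ * ‖EuclideanSpace.single i (1:ℝ)‖ :=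
        ContinuousLinearMap.le_opNorm _ _
    _ ≤ m_U := by
        rw [EuclideanSpace.norm_single]
        simpa [Real.coe_toNNReal _ hm.le] using hb

theorem hfhr_lyapunov_condition (d : ℕ) (α β : ℝ) (hα : 0 < α) (hβ : 0 < β)
    (a : ℝ) (ha0 : 0 < a) (ha1 : a < 1)
    (U : EuclideanSpace ℝ (Fin d) → ℝ) (hU : ContDiff ℝ 2 U)
    (c₁ C₁ : ℝ) (hc₁ : 0 < c₁)
    (hdrift : ∀ θ, ⟪θ, gradient U θ⟫ ≥ c₁ * ‖θ‖ ^ 2 - C₁)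
    (m_U : ℝ) (hm : 0 < m_U)
    (hLip : ∀ θ₁ θ₂, ‖gradient U θ₁ - gradient U θ₂‖ ≤ m_U * ‖θ₁ - θ₂‖)
    (hmin : ∃ θs, ∀ θ, U θs ≤ U θ) :
    ∃ b > 0, ∃ A > 0, ∃ B > 0, ∃ C > 0,
      ∀ x : EuclideanSpace ℝ (Fin d) × EuclideanSpace ℝ (Fin d),
        -(LRe U α β
            (fun y => Real.exp (a * (U y.1 + ‖y.2‖ ^ 2 / 2) + b * ⟪y.1, y.2⟫)) x)
          / Real.exp (a * (U x.1 + ‖x.2‖ ^ 2 / 2) + b * ⟪x.1, x.2⟫)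
        ≥ A * ‖x.1‖ ^ 2 + B * ‖x.2‖ ^ 2 - C := by
  obtain ⟨θs, hθs⟩ := hmin
  -- gradient vanishes at the minimizer
  have hgrad0 : gradient U θs = 0 := by
    have hloc : IsLocalMin U θs := Filter.Eventually.of_forall hθs
    have h2 := hloc.fderiv_eq_zero
    rw [gradient, h2]; simp
  have hgrad : ∀ (t v : EuclideanSpace ℝ (Fin d)), fderiv ℝ U t v = ⟪gradient U t, v⟫ := by
    intro t v
    have h := ((hU.differentiable (by norm_num)) t).hasGradientAt
    rw [hasGradientAt_iff_hasFDerivAt] at h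
    rw [h.fderiv, InnerProductSpace.toDual_apply_apply]
  have pd_eq : ∀ (i : Fin d) (t : EuclideanSpace ℝ (Fin d)), pdUe i U t = gradient U t i := by
    intro i t
    rw [pdUe, hgrad]
    rw [EuclideanSpace.inner_single_right]; simp
  obtain ⟨b, hb0, A, hA, B, hB, C, hC, hkey⟩ :=
    key_alg α β a c₁ C₁ m_U ‖θs‖ (d : ℝ) hα hβ ha0 ha1 hc₁ hm (norm_nonneg _)
      (Nat.cast_nonneg d)
  refine ⟨b, hb0, A, hA, B, hB, C, hC, fun x => ?_⟩
  -- scalar abbreviations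
  have hs1 : ∑ i, (-(β * pdUe i U x.1) + x.2 i)
        * (Real.exp (a * (U x.1 + ‖x.2‖ ^ 2 / 2) + b * ⟪x.1, x.2⟫)
            * (a * pdUe i U x.1 + b * x.2 i))
      = Real.exp (a * (U x.1 + ‖x.2‖ ^ 2 / 2) + b * ⟪x.1, x.2⟫)
        * ∑ i, (-(β * pdUe i U x.1) + x.2 i) * (a * pdUe i U x.1 + b * x.2 i) := by
    rw [Finset.mul_sum]; exact Finset.sum_congr rfl fun i _ => by ring
  have hs2 : ∑ i, (-(α * x.2 i) - pdUe i U x.1)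
        * (Real.exp (a * (U x.1 + ‖x.2‖ ^ 2 / 2) + b * ⟪x.1, x.2⟫)
            * (a * x.2 i + b * x.1 i))
      = Real.exp (a * (U x.1 + ‖x.2‖ ^ 2 / 2) + b * ⟪x.1, x.2⟫)
        * ∑ i, (-(α * x.2 i) - pdUe i U x.1) * (a * x.2 i + b * x.1 i) := by
    rw [Finset.mul_sum]; exact Finset.sum_congr rfl fun i _ => by ring
  have hs3 : ∑ i, Real.exp (a * (U x.1 + ‖x.2‖ ^ 2 / 2) + b * ⟪x.1, x.2⟫)
        * ((a * pdUe i U x.1 + b * x.2 i) ^ 2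
            + a * fderiv ℝ (pdUe i U) x.1 (EuclideanSpace.single i 1))
      = Real.exp (a * (U x.1 + ‖x.2‖ ^ 2 / 2) + b * ⟪x.1, x.2⟫)
        * ∑ i, ((a * pdUe i U x.1 + b * x.2 i) ^ 2
            + a * fderiv ℝ (pdUe i U) x.1 (EuclideanSpace.single i 1)) :=
    (Finset.mul_sum _ _ _).symm
  have hs4 : ∑ i, Real.exp (a * (U x.1 + ‖x.2‖ ^ 2 / 2) + b * ⟪x.1, x.2⟫)
        * ((a * x.2 i + b * x.1 i) ^ 2 + a)
      = Real.exp (a * (U x.1 + ‖x.2‖ ^ 2 / 2) + b * ⟪x.1, x.2⟫)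
        * ∑ i, ((a * x.2 i + b * x.1 i) ^ 2 + a) :=
    (Finset.mul_sum _ _ _).symm
  -- per-coordinate algebraic identity
  have hpoint : ∀ i : Fin d,
      (-(β * pdUe i U x.1) + x.2 i) * (a * pdUe i U x.1 + b * x.2 i)
        + (-(α * x.2 i) - pdUe i U x.1) * (a * x.2 i + b * x.1 i)
        + β * ((a * pdUe i U x.1 + b * x.2 i) ^ 2
            + a * fderiv ℝ (pdUe i U) x.1 (EuclideanSpace.single i 1))
        + α * ((a * x.2 i + b * x.1 i) ^ 2 + a)
      = (-(a * β * (1 - a))) * (pdUe i U x.1 * pdUe i U x.1)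
        + (b * β * (2 * a - 1)) * (pdUe i U x.1 * x.2 i)
        + (b + β * b ^ 2 - a * α * (1 - a)) * (x.2 i * x.2 i)
        + (b * α * (2 * a - 1)) * (x.1 i * x.2 i)
        + (α * b ^ 2) * (x.1 i * x.1 i)
        + (-b) * (pdUe i U x.1 * x.1 i)
        + (a * β) * fderiv ℝ (pdUe i U) x.1 (EuclideanSpace.single i 1)
        + a * α := fun i => by ring
  -- the scalar bracket
  have hS : (∑ i, (-(β * pdUe i U x.1) + x.2 i) * (a * pdUe i U x.1 + b * x.2 i))
        + (∑ i, (-(α * x.2 i) - pdUe i U x.1) * (a * x.2 i + b * x.1 i))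
        + β * (∑ i, ((a * pdUe i U x.1 + b * x.2 i) ^ 2
            + a * fderiv ℝ (pdUe i U) x.1 (EuclideanSpace.single i 1)))
        + α * (∑ i, ((a * x.2 i + b * x.1 i) ^ 2 + a))
      = (-(a * β * (1 - a))) * (∑ i, pdUe i U x.1 * pdUe i U x.1)
        + (b * β * (2 * a - 1)) * (∑ i, pdUe i U x.1 * x.2 i)
        + (b + β * b ^ 2 - a * α * (1 - a)) * (∑ i, x.2 i * x.2 i)
        + (b * α * (2 * a - 1)) * (∑ i, x.1 i * x.2 i)
        + (α * b ^ 2) * (∑ i, x.1 i * x.1 i)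
        + (-b) * (∑ i, pdUe i U x.1 * x.1 i)
        + (a * β) * (∑ i, fderiv ℝ (pdUe i U) x.1 (EuclideanSpace.single i 1))
        + a * α * (d : ℝ) := by
    rw [Finset.mul_sum, Finset.mul_sum, ← Finset.sum_add_distrib, ← Finset.sum_add_distrib,
      ← Finset.sum_add_distrib]
    rw [Finset.sum_congr rfl fun i _ => hpoint i]
    simp only [Finset.sum_add_distrib, ← Finset.mul_sum, Finset.sum_const, Finset.card_univ,
      Fintype.card_fin, nsmul_eq_mul]
    ring
  have hLRe : LRe U α β
        (fun y => Real.exp (a * (U y.1 + ‖y.2‖ ^ 2 / 2) + b * ⟪y.1, y.2⟫)) x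
      = Real.exp (a * (U x.1 + ‖x.2‖ ^ 2 / 2) + b * ⟪x.1, x.2⟫)
        * ((-(a * β * (1 - a))) * (∑ i, pdUe i U x.1 * pdUe i U x.1)
          + (b * β * (2 * a - 1)) * (∑ i, pdUe i U x.1 * x.2 i)
          + (b + β * b ^ 2 - a * α * (1 - a)) * (∑ i, x.2 i * x.2 i)
          + (b * α * (2 * a - 1)) * (∑ i, x.1 i * x.2 i)
          + (α * b ^ 2) * (∑ i, x.1 i * x.1 i)
          + (-b) * (∑ i, pdUe i U x.1 * x.1 i)
          + (a * β) * (∑ i, fderiv ℝ (pdUe i U) x.1 (EuclideanSpace.single i 1))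
          + a * α * (d : ℝ)) := by
    rw [LRe]
    simp only [DTheta_W U hU a b, DR_W U hU a b, DTheta2 U hU a b, DR2 U hU a b]
    rw [hs1, hs2, hs3, hs4]
    linear_combination Real.exp (a * (U x.1 + ‖x.2‖ ^ 2 / 2) + b * ⟪x.1, x.2⟫) * hS
  -- norm identities
  have hnsq : ∀ v : EuclideanSpace ℝ (Fin d), (∑ i, v i * v i) = ‖v‖ ^ 2 := by
    intro v
    rw [← real_inner_self_eq_norm_sq, PiLp.inner_apply]
    simp only [RCLike.inner_apply, conj_trivial]
  have hinner : ∀ v w : EuclideanSpace ℝ (Fin d), (∑ i, v i * w i) = ⟪v, w⟫ := by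
    intro v w
    simp [PiLp.inner_apply, mul_comm]
  -- rewrite the bracket using norms
  rw [hLRe, neg_div, mul_div_cancel_left₀ _ (Real.exp_pos _).ne']
  rw [hnsq x.1, hnsq x.2]
  -- bounds for the key inequality
  have hgval : ∀ i, pdUe i U x.1 = gradient U x.1 i := fun i => pd_eq i x.1
  have hP : (0:ℝ) ≤ ∑ i, pdUe i U x.1 * pdUe i U x.1 :=
    Finset.sum_nonneg fun i _ => mul_self_nonneg _
  have hGθ : (∑ i, pdUe i U x.1 * x.1 i) ≥ c₁ * ‖x.1‖ ^ 2 - C₁ := by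
    have h1 : (∑ i, pdUe i U x.1 * x.1 i) = ⟪x.1, gradient U x.1⟫ := by
      rw [show ⟪x.1, gradient U x.1⟫ = ∑ i, x.1 i * gradient U x.1 i from by
        rw [PiLp.inner_apply]; simp only [RCLike.inner_apply, conj_trivial, mul_comm]]
      exact Finset.sum_congr rfl fun i _ => by rw [hgval i]; ring
    rw [h1]; exact hdrift x.1
  have hgn : ‖gradient U x.1‖ ≤ m_U * (‖x.1‖ + ‖θs‖) := by
    have h1 := hLip x.1 θs
    rw [hgrad0, sub_zero] at h1
    calc ‖gradient U x.1‖ ≤ m_U * ‖x.1 - θs‖ := h1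
      _ ≤ m_U * (‖x.1‖ + ‖θs‖) :=
          mul_le_mul_of_nonneg_left (norm_sub_le _ _) hm.le
  have hQ : |∑ i, pdUe i U x.1 * x.2 i| ≤ m_U * (‖x.1‖ + ‖θs‖) * ‖x.2‖ := by
    have h1 : (∑ i, pdUe i U x.1 * x.2 i) = ⟪gradient U x.1, x.2⟫ := by
      rw [show ⟪gradient U x.1, x.2⟫ = ∑ i, gradient U x.1 i * x.2 i from by
        rw [PiLp.inner_apply]; simp only [RCLike.inner_apply, conj_trivial, mul_comm]]
      exact Finset.sum_congr rfl fun i _ => by rw [hgval i]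
    rw [h1]
    calc |⟪gradient U x.1, x.2⟫| ≤ ‖gradient U x.1‖ * ‖x.2‖ := abs_real_inner_le_norm _ _
      _ ≤ m_U * (‖x.1‖ + ‖θs‖) * ‖x.2‖ :=
          mul_le_mul_of_nonneg_right hgn (norm_nonneg _)
  have hT : |∑ i, x.1 i * x.2 i| ≤ ‖x.1‖ * ‖x.2‖ := by
    rw [hinner x.1 x.2]; exact abs_real_inner_le_norm _ _
  have hΔ : (∑ i, fderiv ℝ (pdUe i U) x.1 (EuclideanSpace.single i 1)) ≤ m_U * (d : ℝ) := by
    calc (∑ i, fderiv ℝ (pdUe i U) x.1 (EuclideanSpace.single i 1))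
        ≤ ∑ _i : Fin d, m_U :=
          Finset.sum_le_sum fun i _ => hessian_bound U hU m_U hm hLip i x.1
      _ = m_U * (d : ℝ) := by
          rw [Finset.sum_const, Finset.card_univ, Fintype.card_fin, nsmul_eq_mul]; ring
  exact hkey ‖x.1‖ ‖x.2‖ _ _ _ _ _ (norm_nonneg _) (norm_nonneg _) hP hGθ hQ hT hΔ
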